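/- Let C be a chain complex of simplicial R-modules of length n+1: 0 → X_n → ⋯ → X_1 → X_0 → Y → 0, exact in each simplicial degree, such that π_j(X_i) = 0 for j ≤ N − i. Then π_j(Y) = 0 for j ≤ N. -/

import Mathlib

open CategoryTheory Limits AlgebraicTopology

variable {R : Type} [CommRing R]

/-- `π_j` of a simplicial `R`-module: the `j`-th homology of its normalized Moore complex. -/
noncomputable def simplicialPi (A : SimplicialObject (ModuleCat R)) (j : ℕ) : ModuleCat R :=
  ((normalizedMooreComplex (ModuleCat R)).obj A).homology j

private lemma elem_eq_zero {M : ModuleCat R} (h : IsZero M) (a : M) : a = 0 := by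
  have h1 : (𝟙 M) = (0 : M ⟶ M) := h.eq_of_src _ _
  calc a = (𝟙 M) a := rfl
    _ = (0 : M ⟶ M) a := by rw [h1]
    _ = 0 := rfl

private lemma hom_comm_apply {C D : ChainComplex (ModuleCat R) ℕ} (φ : C ⟶ D) (a b : ℕ)
    (x : C.X a) : D.d a b (φ.f a x) = φ.f b (C.d a b x) := by
  exact congrArg (fun g => g.hom x) (φ.comm a b)

private lemma d_d_apply (C : ChainComplex (ModuleCat R) ℕ) (a b c' : ℕ) (x : C.X a) :
    C.d b c' (C.d a b x) = 0 := by
  exact congrArg (fun g => g.hom x) (C.d_comp_d a b c')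

private lemma exactAt_iff_fexact (C : ChainComplex (ModuleCat R) ℕ) (j : ℕ) :
    C.ExactAt j ↔ Function.Exact (C.d (j+1) j) (C.d j (j-1)) := by
  rw [C.exactAt_iff' (j+1) j (j-1) (by simp) (by cases j <;> simp)]
  exact ShortComplex.ShortExact.moduleCat_exact_iff_function_exact _

private lemma pi_isZero_iff (A : SimplicialObject (ModuleCat R)) (j : ℕ) :
    IsZero (simplicialPi A j) ↔
      Function.Exact (((alternatingFaceMapComplex (ModuleCat R)).obj A).d (j+1) j)
        (((alternatingFaceMapComplex (ModuleCat R)).obj A).d j (j-1)) := by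
  rw [← exactAt_iff_fexact, HomologicalComplex.exactAt_iff_isZero_homology]
  exact (DoldKan.homotopyEquivNormalizedMooreComplexAlternatingFaceMapComplex
    (Y := A)).toHomologyIso j |>.isZero_iff

/-- The double-complex staircase chase: any element of the `i`-th column whose vertical
differential lifts one step along the resolution is a vertical boundary plus a horizontal
image, provided the columns are suitably connective and rows exact. -/
private lemma chase (n N : ℕ) (C : ℕ → ChainComplex (ModuleCat R) ℕ)
    (d : ∀ i, C (i+1) ⟶ C i)
    (hzero : ∀ i, n < i → ∀ m, IsZero ((C i).X m))
    (hex : ∀ i m, Function.Exact ((d (i+1)).f m) ((d i).f m))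
    (hcol : ∀ i ≤ n, ∀ p ≤ N - i, Function.Exact ((C i).d (p+1) p) ((C i).d p (p-1))) :
    ∀ k i p, n ≤ i + k → p ≤ N - i →
      ∀ v : (C i).X p, ((C i).d p (p-1) v ∈ Set.range ((d i).f (p-1))) →
        ∃ (u : (C i).X (p+1)) (t : (C (i+1)).X p),
          v = (C i).d (p+1) p u + (d i).f p t := by
  intro k
  induction k with
  | zero =>
    intro i p hni hp v hv
    rcases Nat.lt_or_ge n i with hlt | hge
    · exact ⟨0, 0, by rw [elem_eq_zero (hzero i hlt p) v]; simp⟩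
    · have hin : i = n := le_antisymm hge (by simpa using hni)
      have hdv : (C i).d p (p-1) v = 0 := by
        obtain ⟨w, hw⟩ := hv
        rw [← hw, elem_eq_zero (hzero (i+1) (by omega) _) w, map_zero]
      obtain ⟨u, hu⟩ := ((hcol i (le_of_eq hin) p hp) v).mp hdv
      exact ⟨u, 0, by rw [map_zero, add_zero, hu]⟩
  | succ k ih =>
    intro i p hni hp v hv
    rcases le_or_gt n (i + k) with h | h
    · exact ih i p h hp v hv
    have hiN : i ≤ n := by omega
    match p, hp, v, hv with
    | 0, hp, v, hv =>
      have hdv : (C i).d 0 (0-1) v = 0 := by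
        rw [(C i).shape 0 0 (by simp [ComplexShape.down_Rel])]
        rfl
      obtain ⟨u, hu⟩ := ((hcol i hiN 0 (Nat.zero_le _)) v).mp hdv
      exact ⟨u, 0, by rw [map_zero, add_zero, hu]⟩
    | (q+1), hp, v, hv =>
      have hv' : (C i).d (q+1) q v ∈ Set.range ((d i).f q) := hv
      obtain ⟨w, hw⟩ := hv'
      have hstep : (C (i+1)).d q (q-1) w ∈ Set.range ((d (i+1)).f (q-1)) := by
        apply ((hex i (q-1)) _).mp
        rw [← hom_comm_apply (d i) q (q-1) w, hw, d_d_apply]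
      obtain ⟨u, t, hut⟩ := ih (i+1) q (by omega) (by omega) w hstep
      have hz : (C i).d (q+1) q (v - (d i).f (q+1) u) = 0 := by
        rw [map_sub, ← hw, hut, map_add, (hex i q).apply_apply_eq_zero t, add_zero,
          ← hom_comm_apply (d i) (q+1) q u, sub_self]
      obtain ⟨u', hu'⟩ := ((hcol i hiN (q+1) hp) _).mp hz
      exact ⟨u', u, by rw [hu']; abel⟩

/-- Let `0 → X_n → ⋯ → X_1 → X_0 → Y → 0` be a complex of simplicial `R`-modules, exact in
each simplicial degree, with `π_j(X_i) = 0` for `j ≤ N − i`.  Then `π_j(Y) = 0` for `j ≤ N`.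
Here the complex is encoded as a chain complex `D` of simplicial modules with `D.X 0 = Y`,
`D.X (i+1) = X_i`, vanishing above degree `n+1`, levelwise exact in the middle, with
`X_n → X_{n-1}` levelwise injective and `X_0 → Y` levelwise surjective. -/
theorem pi_isZero_of_levelwise_exact_resolution (R : Type) [CommRing R] (n N : ℕ)
    (D : ChainComplex (SimplexCategoryᵒᵖ ⥤ ModuleCat R) ℕ)
    (htop : ∀ i, n + 1 < i → IsZero (D.X i))
    (hinj : ∀ m : SimplexCategoryᵒᵖ, Function.Injective ((D.d (n + 1) n).app m))
    (hexact : ∀ (i : ℕ) (m : SimplexCategoryᵒᵖ),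
      Function.Exact ((D.d (i + 2) (i + 1)).app m) ((D.d (i + 1) i).app m))
    (hsurj : ∀ m : SimplexCategoryᵒᵖ, Function.Surjective ((D.d 1 0).app m))
    (hconn : ∀ i ≤ n, ∀ j ≤ N - i, IsZero (simplicialPi (D.X (i + 1)) j)) :
    ∀ j ≤ N, IsZero (simplicialPi (D.X 0) j) := by
  intro j hj
  rw [pi_isZero_iff]
  set F := alternatingFaceMapComplex (ModuleCat R) with hF
  set C : ℕ → ChainComplex (ModuleCat R) ℕ := fun i => F.obj (D.X (i+1)) with hC
  set d : ∀ i, C (i+1) ⟶ C i := fun i => F.map (D.d (i+2) (i+1)) with hd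
  set f : C 0 ⟶ F.obj (D.X 0) := F.map (D.d 1 0) with hf
  have hfm : ∀ m, f.f m = (D.d 1 0).app (Opposite.op (SimplexCategory.mk m)) := fun m => rfl
  have hdm : ∀ i m, (d i).f m =
      (D.d (i+2) (i+1)).app (Opposite.op (SimplexCategory.mk m)) := fun i m => rfl
  have hzero : ∀ i, n < i → ∀ m, IsZero ((C i).X m) := by
    intro i hi m
    have h0 : IsZero (D.X (i+1)) := htop (i+1) (by omega)
    have : IsZero ((D.X (i+1)).obj (Opposite.op (SimplexCategory.mk m))) := by
      rw [IsZero.iff_id_eq_zero]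
      calc 𝟙 _ = (𝟙 (D.X (i+1))).app (Opposite.op (SimplexCategory.mk m)) := rfl
        _ = (0 : D.X (i+1) ⟶ D.X (i+1)).app _ := by rw [h0.eq_of_src (𝟙 _) 0]
        _ = 0 := rfl
    exact this
  have hex : ∀ i m, Function.Exact ((d (i+1)).f m) ((d i).f m) := by
    intro i m
    exact hexact (i+1) (Opposite.op (SimplexCategory.mk m))
  have hcol : ∀ i ≤ n, ∀ p ≤ N - i,
      Function.Exact ((C i).d (p+1) p) ((C i).d p (p-1)) := by
    intro i hi p hp
    exact (pi_isZero_iff (D.X (i+1)) p).mp (hconn i hi p hp)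
  intro y
  constructor
  · intro hy
    obtain ⟨x0, hx0⟩ := hsurj (Opposite.op (SimplexCategory.mk j)) y
    have hx0' : f.f j x0 = y := hx0
    have hv : (C 0).d j (j-1) x0 ∈ Set.range ((d 0).f (j-1)) := by
      have h3 := hom_comm_apply f j (j-1) x0
      rw [hx0', hy] at h3
      exact ((hexact 0 (Opposite.op (SimplexCategory.mk (j-1)))) _).mp h3.symm
    obtain ⟨u, t, hut⟩ := chase n N C d hzero hex hcol n 0 j (by omega) (by simpa using hj) x0 hv
    refine ⟨f.f (j+1) u, ?_⟩
    have h4 := hom_comm_apply f (j+1) j u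
    have h5 : f.f j ((d 0).f j t) = 0 := (hexact 0 _).apply_apply_eq_zero t
    calc (F.obj (D.X 0)).d (j+1) j (f.f (j+1) u)
        = f.f j ((C 0).d (j+1) j u) := h4
      _ = f.f j ((C 0).d (j+1) j u) + f.f j ((d 0).f j t) := by rw [h5, add_zero]
      _ = f.f j ((C 0).d (j+1) j u + (d 0).f j t) := (map_add _ _ _).symm
      _ = f.f j x0 := by rw [← hut]
      _ = y := hx0'
  · rintro ⟨x, rfl⟩
    exact d_d_apply _ _ _ _ x
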